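/- Let ν > 0 and z > 0 be real numbers. Then the function t ↦ I_ν(t)²/t is integrable on (0, z) and ∫_0^z I_ν(t)²/t dt = (z/2)^{2ν} / (2ν · Γ(ν+1)²) · ₂F₃(ν, ν+1/2; ν+1, ν+1, 2ν+1; z²). -/

import Mathlib

open Real MeasureTheory Filter

/-- Pochhammer symbol `(a)_k = a (a+1) ⋯ (a+k-1)`. -/
noncomputable def poch (a : ℝ) (k : ℕ) : ℝ := ∏ i ∈ Finset.range k, (a + i)

/-- Generalized hypergeometric function `ₚF_q(a; b; x)`. -/
noncomputable def genHyp (a b : List ℝ) (x : ℝ) : ℝ :=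
  ∑' k : ℕ, ((a.map (fun c => poch c k)).prod / (b.map (fun c => poch c k)).prod)
    * x ^ k / (Nat.factorial k : ℝ)

/-- Bessel function of the first kind `J_ν(x)`. -/
noncomputable def besselJ (ν x : ℝ) : ℝ :=
  (x / 2) ^ ν * ∑' k : ℕ, (-1 : ℝ) ^ k * (x / 2) ^ (2 * k) /
    ((Nat.factorial k : ℝ) * Real.Gamma (ν + k + 1))

/-- Modified Bessel function of the first kind `I_ν(x)`. -/
noncomputable def besselI (ν x : ℝ) : ℝ :=
  (x / 2) ^ ν * ∑' k : ℕ, (x / 2) ^ (2 * k) /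
    ((Nat.factorial k : ℝ) * Real.Gamma (ν + k + 1))

/-- Bessel function of the second kind `Y_ν(x)` (non-integer order). -/
noncomputable def besselY (ν x : ℝ) : ℝ :=
  (besselJ ν x * Real.cos (π * ν) - besselJ (-ν) x) / Real.sin (π * ν)

/-- Macdonald function `K_ν(x)` (non-integer order). -/
noncomputable def besselK (ν x : ℝ) : ℝ :=
  (π / 2) * (besselI (-ν) x - besselI ν x) / Real.sin (π * ν)

/-- Digamma function `ψ(x) = Γ'(x)/Γ(x)`. -/
noncomputable def digam (x : ℝ) : ℝ := deriv Real.Gamma x / Real.Gamma x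

/- ### Auxiliary lemmas -/

lemma poch_zero (a : ℝ) : poch a 0 = 1 := rfl

lemma poch_succ (a : ℝ) (k : ℕ) : poch a (k+1) = poch a k * (a + k) :=
  Finset.prod_range_succ _ _

lemma poch_pos {a : ℝ} (ha : 0 < a) (k : ℕ) : 0 < poch a k :=
  Finset.prod_pos fun i _ => by positivity

lemma poch_reflect (a : ℝ) (m : ℕ) : poch a m = (-1)^m * poch (1 - a - m) m := by
  unfold poch
  rw [← Finset.prod_range_reflect (fun i => a + i) m,
    show ((-1:ℝ))^m = ∏ _i ∈ Finset.range m, (-1:ℝ) by simp, ← Finset.prod_mul_distrib]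
  refine Finset.prod_congr rfl fun i hi => ?_
  have him : i < m := Finset.mem_range.mp hi
  rw [Nat.cast_sub (by omega), Nat.cast_sub (by omega)]
  push_cast
  ring

lemma vandermonde (a b : ℝ) : ∀ n : ℕ,
    ∑ k ∈ Finset.range (n+1), (n.choose k : ℝ) * (poch a k * poch b (n-k)) = poch (a+b) n := by
  intro n
  induction n with
  | zero => simp [poch_zero]
  | succ n ih =>
    rw [show n + 1 + 1 = n + 2 from rfl,
      Finset.sum_choose_succ_mul (fun k l => poch a k * poch b l) n]
    have h1 : ∑ i ∈ Finset.range (n + 1), (n.choose i : ℝ) * (poch a i * poch b (n + 1 - i))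
        = ∑ i ∈ Finset.range (n + 1), (n.choose i : ℝ) * (poch a i * poch b (n - i)) * (b + (n - i : ℕ)) := by
      refine Finset.sum_congr rfl fun i hi => ?_
      have him := Finset.mem_range.mp hi
      have : n + 1 - i = (n - i) + 1 := by omega
      rw [this, poch_succ]; ring
    have h2 : ∑ i ∈ Finset.range (n + 1), (n.choose i : ℝ) * (poch a (i+1) * poch b (n - i))
        = ∑ i ∈ Finset.range (n + 1), (n.choose i : ℝ) * (poch a i * poch b (n - i)) * (a + i) := by
      refine Finset.sum_congr rfl fun i hi => ?_
      rw [poch_succ]; ring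
    rw [h1, h2, poch_succ, ← ih]
    have h3 : ∀ i ∈ Finset.range (n+1), (n.choose i : ℝ) * (poch a i * poch b (n - i)) * (b + (n - i : ℕ))
        + (n.choose i : ℝ) * (poch a i * poch b (n - i)) * (a + i)
        = (n.choose i : ℝ) * (poch a i * poch b (n - i)) * (a + b + n) := by
      intro i hi
      have him : i ≤ n := by have := Finset.mem_range.mp hi; omega
      push_cast [Nat.cast_sub him]
      ring
    rw [← Finset.sum_add_distrib, Finset.sum_congr rfl h3, ← Finset.sum_mul]

lemma poch_add (a : ℝ) (k m : ℕ) : poch a (k + m) = poch a k * poch (a + k) m := by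
  induction m with
  | zero => simp [poch_zero]
  | succ m ih =>
    rw [show k + (m+1) = (k+m)+1 from rfl, poch_succ, ih, poch_succ]
    push_cast; ring

lemma poch_dup (ν : ℝ) (n : ℕ) : poch (2*ν) (2*n) = 4^n * poch ν n * poch (ν+1/2) n := by
  induction n with
  | zero => simp [poch_zero]
  | succ n ih =>
    rw [show 2*(n+1) = (2*n+1)+1 from rfl, poch_succ, poch_succ, ih, poch_succ, poch_succ]
    push_cast; ring

lemma gamma_poch (ν : ℝ) (hν : 0 < ν) (k : ℕ) :
    Real.Gamma (ν + k + 1) = poch (ν+1) k * Real.Gamma (ν+1) := by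
  induction k with
  | zero => simp [poch_zero]
  | succ k ih =>
    have h : ν + (k+1 : ℕ) + 1 = (ν + k + 1) + 1 := by push_cast; ring
    rw [h, Real.Gamma_add_one (by positivity), ih, poch_succ]
    push_cast; ring

lemma key_sum (ν : ℝ) (hν : 0 < ν) (n : ℕ) :
    ∑ k ∈ Finset.range (n+1), (n.choose k : ℝ) *
      (poch (ν+1+k) (n-k) * poch (ν+1+(n-k : ℕ)) k) = poch (2*ν+n+1) n := by
  have h1 : ∀ k ∈ Finset.range (n+1), (n.choose k:ℝ) *
      (poch (ν+1+k) (n-k) * poch (ν+1+(n-k:ℕ)) k)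
      = (-1:ℝ)^n * ((n.choose k:ℝ) * (poch (-(ν+n)) k * poch (-(ν+n)) (n-k))) := by
    intro k hk
    have him : k ≤ n := by have := Finset.mem_range.mp hk; omega
    rw [poch_reflect (ν+1+k) (n-k), poch_reflect (ν+1+(n-k:ℕ)) k]
    rw [Nat.cast_sub him]
    have e1 : (1 : ℝ) - (ν+1+k) - ((n:ℝ)-k) = -(ν+n) := by ring
    have e2 : (1 : ℝ) - (ν+1+((n:ℝ)-k)) - k = -(ν+n) := by ring
    rw [e1, e2]
    have e3 : (-1:ℝ)^(n-k) * (-1:ℝ)^k = (-1:ℝ)^n := by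
      rw [← pow_add]; congr 1; omega
    rw [← e3]; ring
  rw [Finset.sum_congr rfl h1, ← Finset.mul_sum, vandermonde (-(ν+n)) (-(ν+n)) n]
  rw [poch_reflect (2*ν+n+1) n]
  have : (1:ℝ) - (2*ν+n+1) - n = -(ν+n) + -(ν+n) := by ring
  rw [this]

lemma coeff_id (ν : ℝ) (hν : 0 < ν) (n : ℕ) :
    ∑ k ∈ Finset.range (n+1),
      (1/((k.factorial:ℝ) * Real.Gamma (ν+k+1))) *
        (1/(((n-k).factorial:ℝ) * Real.Gamma (ν+(n-k:ℕ)+1)))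
    = poch (2*ν+n+1) n /
      (Real.Gamma (ν+1)^2 * poch (ν+1) n^2 * (n.factorial:ℝ)) := by
  rw [← key_sum ν hν n, Finset.sum_div]
  refine Finset.sum_congr rfl fun k hk => ?_
  have him : k ≤ n := by have := Finset.mem_range.mp hk; omega
  have hfac : (n.factorial : ℝ) = (n.choose k : ℝ) * k.factorial * (n-k).factorial := by
    rw [← Nat.choose_mul_factorial_mul_factorial him]; push_cast; ring
  have hPn1 : poch (ν+1) n = poch (ν+1) k * poch (ν+1+k) (n-k) := by
    rw [← poch_add, Nat.add_sub_cancel' him]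
  have hPn2 : poch (ν+1) n = poch (ν+1) (n-k) * poch (ν+1+(n-k:ℕ)) k := by
    rw [← poch_add]; congr 1; omega
  rw [gamma_poch ν hν k, gamma_poch ν hν (n-k)]
  have hA : 0 < poch (ν+1+(k:ℕ)) (n-k) := poch_pos (by positivity) _
  have hB : 0 < poch (ν+1+((n-k:ℕ):ℝ)) k := poch_pos (by positivity) _
  have hPk : 0 < poch (ν+1) k := poch_pos (by positivity) _
  have hPnk : 0 < poch (ν+1) (n-k) := poch_pos (by positivity) _
  have hG : 0 < Real.Gamma (ν+1) := Real.Gamma_pos_of_pos (by positivity)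
  have hC : 0 < (n.choose k : ℝ) := by exact_mod_cast Nat.choose_pos him
  have hk1 : (0:ℝ) < k.factorial := by exact_mod_cast Nat.factorial_pos k
  have hk2 : (0:ℝ) < (n-k).factorial := by exact_mod_cast Nat.factorial_pos (n-k)
  rw [hfac]
  rw [show poch (ν+1) n ^ 2 = (poch (ν+1) k * poch (ν+1+k) (n-k)) *
    (poch (ν+1) (n-k) * poch (ν+1+(n-k:ℕ)) k) by rw [← hPn1, ← hPn2]; ring]
  rw [div_mul_div_comm, div_eq_div_iff (by positivity) (by positivity)]
  ring

lemma ratio_key (ν : ℝ) (hν : 0 < ν) (n : ℕ) :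
    poch (2*ν+n+1) n * (2*ν * poch (2*ν+1) n) =
      poch ν n * poch (ν+1/2) n * ((4:ℝ)^n * (2*ν+2*n)) := by
  have hd := poch_dup ν n
  have h1 : poch (2*ν+1) (2*n) = poch (2*ν+1) n * poch (2*ν+n+1) n := by
    rw [show 2*n = n+n from two_mul n, poch_add]
    congr 2
    ring
  have a1 : poch (2*ν) (2*n+1) = poch (2*ν) (2*n) * (2*ν + 2*n) := by
    rw [poch_succ]; push_cast; ring
  have a2 : poch (2*ν) (2*n+1) = 2*ν * poch (2*ν+1) (2*n) := by
    rw [show 2*n+1 = 1+2*n from by omega, poch_add]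
    norm_num [poch]
  calc poch (2*ν+n+1) n * (2*ν * poch (2*ν+1) n) = 2*ν * poch (2*ν+1) (2*n) := by rw [h1]; ring
  _ = poch (2*ν) (2*n) * (2*ν+2*n) := by rw [← a2, a1]
  _ = _ := by rw [hd]; ring

lemma fact_le_poch (ν : ℝ) (hν : 0 ≤ ν) (k : ℕ) : (k.factorial : ℝ) ≤ poch (ν+1) k := by
  induction k with
  | zero => simp [poch_zero]
  | succ k ih =>
    rw [poch_succ]
    push_cast [Nat.factorial_succ]
    have h1 : (0:ℝ) < k.factorial := by exact_mod_cast k.factorial_pos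
    have h2 : ((k:ℝ)+1) ≤ ν+1+k := by linarith
    nlinarith [poch_pos (show (0:ℝ) < ν+1 by linarith) k]

lemma term_eq (ν z : ℝ) (hν : 0 < ν) (hz : 0 < z) (n : ℕ) :
    (∑ k ∈ Finset.range (n+1),
       (1/((k.factorial:ℝ) * Real.Gamma (ν+k+1))) *
         (1/(((n-k).factorial:ℝ) * Real.Gamma (ν+(n-k:ℕ)+1))))
      * ((z/2)^(2*ν:ℝ) * ((z/2)^2)^n) / (2*ν+2*n)
    = (z/2)^(2*ν:ℝ) / (2*ν*Real.Gamma (ν+1)^2) *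
      (poch ν n * (poch (ν+1/2) n * 1) /
        (poch (ν+1) n * (poch (ν+1) n * (poch (2*ν+1) n * 1))) * (z^2)^n / (n.factorial:ℝ)) := by
  rw [coeff_id ν hν n]
  have hG := Real.Gamma_pos_of_pos (show (0:ℝ) < ν+1 by linarith)
  have hP1 := poch_pos (show (0:ℝ) < ν+1 by linarith) n
  have hP2 := poch_pos (show (0:ℝ) < 2*ν+1 by linarith) n
  have hP3 := poch_pos (show (0:ℝ) < 2*ν+(n:ℝ)+1 by positivity) n
  have hνn : (0:ℝ) < 2*ν+2*n := by positivity
  have hfa : (0:ℝ) < n.factorial := by exact_mod_cast n.factorial_pos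
  have hkey := ratio_key ν hν n
  rw [show ν+1/2 = (ν*2+1)/2 from by ring] at hkey ⊢
  field_simp
  rw [div_pow]
  field_simp
  linear_combination (norm := ring_nf) hkey / 2

/- ### Auxiliary analytic lemmas -/

/-- Cauchy-product coefficient of `I_ν(t)^2`. -/
noncomputable def cC (ν : ℝ) (n : ℕ) : ℝ := ∑ k ∈ Finset.range (n+1),
  (1/((k.factorial:ℝ) * Real.Gamma (ν+k+1))) * (1/(((n-k).factorial:ℝ) * Real.Gamma (ν+(n-k:ℕ)+1)))

lemma cC_pos (ν : ℝ) (hν : 0 < ν) (n : ℕ) : 0 < cC ν n := by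
  unfold cC
  apply Finset.sum_pos _ ⟨0, Finset.mem_range.mpr (by omega)⟩
  intro k hk
  have h1 := Real.Gamma_pos_of_pos (show (0:ℝ) < ν+k+1 by positivity)
  have h2 := Real.Gamma_pos_of_pos (show (0:ℝ) < ν+(n-k:ℕ)+1 by positivity)
  have h3 : (0:ℝ) < k.factorial := by exact_mod_cast k.factorial_pos
  have h4 : (0:ℝ) < (n-k).factorial := by exact_mod_cast (n-k).factorial_pos
  positivity

lemma u_summable (ν : ℝ) (hν : 0 < ν) (t : ℝ) :
    Summable fun k : ℕ => ‖(t/2)^(2*k) / ((k.factorial:ℝ) * Real.Gamma (ν+k+1))‖ := by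
  have hG1 := Real.Gamma_pos_of_pos (show (0:ℝ) < ν+1 by linarith)
  apply Summable.of_nonneg_of_le (fun k => norm_nonneg _) (fun k => ?_)
    ((Real.summable_pow_div_factorial ((t/2)^2)).mul_left (1/Real.Gamma (ν+1)))
  have hGk := Real.Gamma_pos_of_pos (show (0:ℝ) < ν+k+1 by positivity)
  have hk : (0:ℝ) < k.factorial := by exact_mod_cast k.factorial_pos
  have hle : Real.Gamma (ν+1) ≤ Real.Gamma (ν+k+1) := by
    rw [gamma_poch ν hν k]
    nlinarith [fact_le_poch ν hν.le k, (show (1:ℝ) ≤ k.factorial by exact_mod_cast k.factorial_pos)]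
  rw [Real.norm_eq_abs, abs_div, abs_of_pos (mul_pos hk hGk), pow_mul, abs_pow, abs_of_nonneg (sq_nonneg (t/2))]
  rw [show (1/Real.Gamma (ν+1)) * (((t/2)^2)^k / k.factorial)
    = (((t/2)^2)^k) / ((k.factorial:ℝ) * Real.Gamma (ν+1)) from by ring]
  gcongr

lemma cauchy_sum (ν : ℝ) (t : ℝ) (n : ℕ) :
    ∑ k ∈ Finset.range (n+1), ((t/2)^(2*k) / ((k.factorial:ℝ) * Real.Gamma (ν+k+1))) *
      ((t/2)^(2*(n-k)) / (((n-k).factorial:ℝ) * Real.Gamma (ν+(n-k:ℕ)+1)))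
    = cC ν n * ((t/2)^2)^n := by
  unfold cC
  rw [Finset.sum_mul]
  refine Finset.sum_congr rfl fun k hk => ?_
  have him : k ≤ n := by have := Finset.mem_range.mp hk; omega
  have hp : (t/2)^(2*k) * (t/2)^(2*(n-k)) = ((t/2)^2)^n := by
    rw [← pow_add, ← pow_mul]
    congr 1
    omega
  rw [← hp]
  ring

lemma sq_tsum (ν : ℝ) (hν : 0 < ν) (t : ℝ) :
    (∑' k:ℕ, (t/2)^(2*k) / ((k.factorial:ℝ) * Real.Gamma (ν+k+1)))^2
      = ∑' n:ℕ, cC ν n * ((t/2)^2)^n := by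
  rw [sq, tsum_mul_tsum_eq_tsum_sum_range_of_summable_norm (u_summable ν hν t) (u_summable ν hν t)]
  exact tsum_congr fun n => cauchy_sum ν t n

lemma cC_mul_summable (ν : ℝ) (hν : 0 < ν) (t : ℝ) :
    Summable (fun n : ℕ => cC ν n * ((t/2)^2)^n) := by
  have := (summable_norm_sum_mul_range_of_summable_norm
    (u_summable ν hν t) (u_summable ν hν t)).of_norm
  exact this.congr fun n => cauchy_sum ν t n

lemma besselI_sq_div (ν : ℝ) (hν : 0 < ν) {t : ℝ} (ht : 0 < t) :
    besselI ν t ^ 2 / t = ∑' n : ℕ, cC ν n * ((t/2)^(2*ν:ℝ) * ((t/2)^2)^n / t) := by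
  unfold besselI
  rw [mul_pow]
  have h2 : ((t/2:ℝ)^(ν:ℝ))^2 = (t/2)^(2*ν:ℝ) := by
    rw [← Real.rpow_natCast ((t/2)^(ν:ℝ)) 2, ← Real.rpow_mul (by linarith : (0:ℝ) ≤ t/2)]
    norm_num [mul_comm]
  rw [h2, sq_tsum ν hν t]
  rw [show (t/2)^(2*ν:ℝ) * (∑' n:ℕ, cC ν n * ((t/2)^2)^n) / t
    = ((t/2)^(2*ν:ℝ)/t) * (∑' n:ℕ, cC ν n * ((t/2)^2)^n) from by ring]
  rw [← tsum_mul_left]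
  exact tsum_congr fun n => by ring

lemma g_eq (ν : ℝ) (n : ℕ) {t : ℝ} (ht : 0 < t) :
    (t/2)^(2*ν:ℝ) * ((t/2)^2)^n / t = ((2:ℝ)^(2*ν:ℝ))⁻¹ * ((4:ℝ)⁻¹)^n * t^(2*ν+2*n-1:ℝ) := by
  rw [Real.div_rpow ht.le (by norm_num : (0:ℝ) ≤ 2)]
  rw [show ((t/2)^2 : ℝ) = t^2 / 4 from by ring, div_pow, ← pow_mul]
  have h1 : (t:ℝ)^(2*n) = t^((2*n : ℕ):ℝ) := (Real.rpow_natCast t (2*n)).symm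
  have key : t^(2*ν:ℝ) * t^((2*n:ℕ):ℝ) / t = t^(2*ν+2*n-1:ℝ) := by
    rw [← Real.rpow_add ht, show (2*ν+2*n-1:ℝ) = (2*ν + (2*n:ℕ)) - 1 from by push_cast; ring,
      Real.rpow_sub ht, Real.rpow_one]
  rw [← key, h1]
  rw [inv_pow]; ring

lemma g_integral (ν z : ℝ) (hν : 0 < ν) (hz : 0 < z) (n : ℕ) :
    IntegrableOn (fun t => (t/2)^(2*ν:ℝ) * ((t/2)^2)^n / t) (Set.Ioo 0 z) ∧
    ∫ t in Set.Ioo 0 z, (t/2)^(2*ν:ℝ) * ((t/2)^2)^n / t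
      = (z/2)^(2*ν:ℝ) * ((z/2)^2)^n / (2*ν+2*n) := by
  have hn0 : (0:ℝ) ≤ (n:ℝ) := n.cast_nonneg
  have hr : (-1:ℝ) < 2*ν+2*n-1 := by linarith
  have hii : IntervalIntegrable (fun x:ℝ => x^(2*ν+2*n-1:ℝ)) volume 0 z :=
    intervalIntegral.intervalIntegrable_rpow' hr
  have hio : IntegrableOn (fun x:ℝ => ((2:ℝ)^(2*ν:ℝ))⁻¹ * ((4:ℝ)⁻¹)^n * x^(2*ν+2*n-1:ℝ))
      (Set.Ioo 0 z) := by
    apply Integrable.const_mul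
    exact (hii.1).mono_set Set.Ioo_subset_Ioc_self
  constructor
  · exact hio.congr_fun (fun t ht => (g_eq ν n ht.1).symm) measurableSet_Ioo
  · rw [MeasureTheory.setIntegral_congr_fun measurableSet_Ioo
      (fun t ht => g_eq ν n ht.1)]
    rw [MeasureTheory.integral_const_mul, ← MeasureTheory.integral_Ioc_eq_integral_Ioo,
      ← intervalIntegral.integral_of_le hz.le, integral_rpow (Or.inl hr),
      Real.zero_rpow (by linarith : 2*ν+2*(n:ℝ)-1+1 ≠ 0)]
    have hgz := g_eq ν n hz
    have hz1 : z^(2*ν+2*(n:ℝ)-1+1) = z^(2*ν+2*(n:ℝ)-1:ℝ) * z := by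
      rw [Real.rpow_add hz, Real.rpow_one]
    rw [hz1]
    rw [div_eq_iff hz.ne'] at hgz
    rw [hgz, show (2*ν+2*(n:ℝ)-1+1 : ℝ) = 2*ν+2*n from by ring]
    ring

theorem besselI_sq_div_integral (ν z : ℝ) (hν : 0 < ν) (hz : 0 < z) :
    IntegrableOn (fun t => besselI ν t ^ 2 / t) (Set.Ioo 0 z) ∧
    ∫ t in Set.Ioo 0 z, besselI ν t ^ 2 / t =
      (z / 2) ^ (2 * ν) / (2 * ν * Real.Gamma (ν + 1) ^ 2) *
        genHyp [ν, ν + 1 / 2] [ν + 1, ν + 1, 2 * ν + 1] (z ^ 2) := by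
  have hq : ∀ t : ℝ, 0 < t → (0:ℝ) < (t/2)^(2*ν:ℝ) :=
    fun t ht => Real.rpow_pos_of_pos (by linarith) _
  set g : ℕ → ℝ → ℝ := fun n t => cC ν n * ((t/2)^(2*ν:ℝ) * ((t/2)^2)^n / t) with hg
  have hgmeas : ∀ n, Measurable (g n) := by intro n; rw [hg]; fun_prop
  have hgnn : ∀ n, ∀ t ∈ Set.Ioo (0:ℝ) z, 0 ≤ g n t := by
    intro n t ht
    have h1 := cC_pos ν hν n
    have h2 := hq t ht.1
    have h3 := ht.1
    rw [hg]
    positivity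
  have hgint : ∀ n, IntegrableOn (g n) (Set.Ioo 0 z) :=
    fun n => ((g_integral ν z hν hz n).1.const_mul _)
  have hgval : ∀ n, ∫ t in Set.Ioo 0 z, g n t
      = cC ν n * ((z/2)^(2*ν:ℝ) * ((z/2)^2)^n / (2*ν+2*n)) := by
    intro n
    rw [hg]
    simp only
    rw [MeasureTheory.integral_const_mul, (g_integral ν z hν hz n).2]
  set I : ℕ → ℝ := fun n => cC ν n * ((z/2)^(2*ν:ℝ) * ((z/2)^2)^n / (2*ν+2*n)) with hI
  have hInn : ∀ n, 0 ≤ I n := by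
    intro n
    have h1 := cC_pos ν hν n
    have h2 := hq z hz
    have h3 : (0:ℝ) < 2*ν+2*n := by have : (0:ℝ) ≤ n := Nat.cast_nonneg n; linarith
    rw [hI]
    positivity
  have hIsum : Summable I := by
    apply Summable.of_nonneg_of_le hInn (fun n => ?_)
      ((cC_mul_summable ν hν z).mul_left ((z/2)^(2*ν:ℝ)/(2*ν)))
    have h1 := (cC_pos ν hν n).le
    have h2 := (hq z hz).le
    have h4 : (2*ν:ℝ) ≤ 2*ν+2*n := by have : (0:ℝ) ≤ n := Nat.cast_nonneg n; linarith
    rw [hI]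
    simp only
    rw [show (z/2)^(2*ν:ℝ)/(2*ν) * (cC ν n * ((z/2)^2)^n)
      = cC ν n * ((z/2)^(2*ν:ℝ) * ((z/2)^2)^n / (2*ν)) from by ring]
    gcongr
    all_goals first | positivity | linarith
  have hptsum : ∀ t : ℝ, 0 < t → Summable (fun n => g n t) := by
    intro t ht
    apply ((cC_mul_summable ν hν t).mul_left ((t/2)^(2*ν:ℝ)/t)).congr
    intro n
    rw [hg]
    simp only
    ring
  have hae : (fun t => besselI ν t ^ 2 / t)
      =ᵐ[volume.restrict (Set.Ioo 0 z)] (fun t => ∑' n, g n t) := by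
    rw [Filter.EventuallyEq, ae_restrict_iff' measurableSet_Ioo]
    exact Eventually.of_forall fun t ht => besselI_sq_div ν hν ht.1
  have hMeas : Measurable (fun t => (∑' n, ENNReal.ofReal (g n t)).toReal) :=
    (Measurable.ennreal_tsum fun n => (hgmeas n).ennreal_ofReal).ennreal_toReal
  have htsum_eq : ∀ t ∈ Set.Ioo (0:ℝ) z,
      (∑' n, ENNReal.ofReal (g n t)).toReal = ∑' n, g n t := by
    intro t ht
    rw [← ENNReal.ofReal_tsum_of_nonneg (fun n => hgnn n t ht) (hptsum t ht.1),
      ENNReal.toReal_ofReal (tsum_nonneg (fun n => hgnn n t ht))]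
  have hSae : AEStronglyMeasurable (fun t => ∑' n, g n t) (volume.restrict (Set.Ioo 0 z)) := by
    apply hMeas.aestronglyMeasurable.congr
    rw [Filter.EventuallyEq, ae_restrict_iff' measurableSet_Ioo]
    exact Eventually.of_forall htsum_eq
  have hnn_ae : 0 ≤ᵐ[volume.restrict (Set.Ioo 0 z)] (fun t => ∑' n, g n t) := by
    rw [Filter.EventuallyLE, ae_restrict_iff' measurableSet_Ioo]
    exact Eventually.of_forall fun t ht => by
      simpa using tsum_nonneg (fun n => hgnn n t ht)
  have hlint : ∫⁻ t in Set.Ioo 0 z, ENNReal.ofReal (∑' n, g n t)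
      = ENNReal.ofReal (∑' n, I n) := by
    have e1 : ∫⁻ t in Set.Ioo 0 z, ENNReal.ofReal (∑' n, g n t)
        = ∫⁻ t in Set.Ioo 0 z, ∑' n, ENNReal.ofReal (g n t) := by
      apply lintegral_congr_ae
      rw [Filter.EventuallyEq, ae_restrict_iff' measurableSet_Ioo]
      exact Eventually.of_forall fun t ht =>
        ENNReal.ofReal_tsum_of_nonneg (fun n => hgnn n t ht) (hptsum t ht.1)
    rw [e1, lintegral_tsum (fun n => ((hgmeas n).ennreal_ofReal).aemeasurable)]
    have e2 : ∀ n, ∫⁻ t in Set.Ioo 0 z, ENNReal.ofReal (g n t) = ENNReal.ofReal (I n) := by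
      intro n
      rw [← MeasureTheory.ofReal_integral_eq_lintegral_ofReal (hgint n)
        ((ae_restrict_iff' measurableSet_Ioo).2 (Eventually.of_forall (hgnn n)))]
      rw [hgval n]
    rw [tsum_congr e2, ← ENNReal.ofReal_tsum_of_nonneg hInn hIsum]
  have hFin : HasFiniteIntegral (fun t => ∑' n, g n t) (volume.restrict (Set.Ioo 0 z)) := by
    rw [hasFiniteIntegral_iff_ofReal hnn_ae]
    rw [hlint]
    exact ENNReal.ofReal_lt_top
  have hIntTsum : Integrable (fun t => ∑' n, g n t) (volume.restrict (Set.Ioo 0 z)) :=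
    ⟨hSae, hFin⟩
  have hIntF : IntegrableOn (fun t => besselI ν t ^ 2 / t) (Set.Ioo 0 z) :=
    hIntTsum.congr hae.symm
  refine ⟨hIntF, ?_⟩
  have hnorm : ∀ n, ∫ t in Set.Ioo 0 z, ‖g n t‖ = I n := by
    intro n
    rw [MeasureTheory.setIntegral_congr_fun measurableSet_Ioo
      (fun t ht => Real.norm_of_nonneg (hgnn n t ht)), hgval n]
  have hswap := MeasureTheory.integral_tsum_of_summable_integral_norm (μ := volume.restrict (Set.Ioo 0 z))
    (fun n => hgint n) (hIsum.congr fun n => (hnorm n).symm)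
  calc ∫ t in Set.Ioo 0 z, besselI ν t ^ 2 / t
      = ∫ t in Set.Ioo 0 z, ∑' n, g n t := integral_congr_ae hae
    _ = ∑' n, ∫ t in Set.Ioo 0 z, g n t := hswap.symm
    _ = ∑' n, I n := tsum_congr fun n => hgval n
    _ = ∑' n, ((z/2)^(2*ν:ℝ) / (2*ν*Real.Gamma (ν+1)^2)) *
          (poch ν n * (poch (ν+1/2) n * 1) /
            (poch (ν+1) n * (poch (ν+1) n * (poch (2*ν+1) n * 1))) * (z^2)^n / (n.factorial:ℝ)) := by
        refine tsum_congr fun n => ?_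
        rw [hI]
        simp only
        rw [← term_eq ν z hν hz n, ← mul_div_assoc]
        simp only [cC]
    _ = (z / 2) ^ (2 * ν) / (2 * ν * Real.Gamma (ν + 1) ^ 2) *
          genHyp [ν, ν + 1 / 2] [ν + 1, ν + 1, 2 * ν + 1] (z ^ 2) := by
        rw [tsum_mul_left]
        simp only [genHyp, List.map_cons, List.map_nil, List.prod_cons, List.prod_nil]
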